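/- Let A be a positive operator on H and T, S A-bounded operators with TS = ST. Then r_A(TS) ≤ ½(ω_A(TS) + ‖T²‖_A^{1/2} ‖S²‖_A^{1/2}). -/

import Mathlib

set_option linter.unusedSectionVars false


open ContinuousLinearMap

variable {H : Type*} [NormedAddCommGroup H] [InnerProductSpace ℂ H] [CompleteSpace H]

/-- The seminorm `‖x‖_A = ‖A^{1/2} x‖ = √⟨Ax, x⟩` induced by a positive operator `A`. -/
noncomputable def anorm (A : H →L[ℂ] H) (x : H) : ℝ :=
  Real.sqrt (A.reApplyInnerSelf x)

/-- `T` is `A`-bounded: `‖Tx‖_A ≤ c ‖x‖_A` for some `c > 0`. -/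
def ABounded (A T : H →L[ℂ] H) : Prop :=
  ∃ c : ℝ, 0 < c ∧ ∀ x : H, anorm A (T x) ≤ c * anorm A x

/-- The operator seminorm `‖T‖_A`: the least `c ≥ 0` with `‖Tx‖_A ≤ c ‖x‖_A` for all `x`. -/
noncomputable def aNorm (A T : H →L[ℂ] H) : ℝ :=
  sInf {c : ℝ | 0 ≤ c ∧ ∀ x : H, anorm A (T x) ≤ c * anorm A x}

/-- The `A`-spectral radius `r_A(T) = inf_{n ≥ 1} ‖T^n‖_A^{1/n}`. -/
noncomputable def aSpecRad (A T : H →L[ℂ] H) : ℝ :=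
  ⨅ n : ℕ+, aNorm A (T ^ (n : ℕ)) ^ ((n : ℝ)⁻¹)

/-- The `A`-numerical radius `ω_A(T) = sup {|⟨ATx, x⟩| : ‖x‖_A = 1}`. -/
noncomputable def aNumRad (A T : H →L[ℂ] H) : ℝ :=
  sSup {c : ℝ | ∃ x : H, anorm A x = 1 ∧ c = ‖(inner ℂ (A (T x)) x : ℂ)‖}


section Aux

variable (A R : H →L[ℂ] H)

lemma anorm_nonneg' (x : H) : 0 ≤ anorm A x := Real.sqrt_nonneg _

set_option synthInstance.maxHeartbeats 1000000 in
set_option maxHeartbeats 1000000 in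
lemma exists_sqrt (hA : A.IsPositive) :
    ∃ R : H →L[ℂ] H,
      (∀ x y : H, (inner ℂ (A x) y : ℂ) = inner ℂ (R x) (R y)) ∧
      (∀ x : H, anorm A x = ‖R x‖) := by
  have h0 : 0 ≤ A := (nonneg_iff_isPositive A).mpr hA
  set R := CFC.sqrt A with hRdef
  have hRsa : IsSelfAdjoint R := IsSelfAdjoint.of_nonneg (CFC.sqrt_nonneg A)
  have hRR : R * R = A := CFC.sqrt_mul_sqrt_self A h0
  have hi : ∀ x y : H, (inner ℂ (A x) y : ℂ) = inner ℂ (R x) (R y) := by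
    intro x y
    rw [← hRR, ContinuousLinearMap.mul_apply]
    exact (isSelfAdjoint_iff_isSymmetric.mp hRsa) (R x) y
  refine ⟨R, hi, fun x => ?_⟩
  unfold anorm
  rw [reApplyInnerSelf]
  rw [show (inner ℂ (A x) x : ℂ) = inner ℂ (R x) (R x) from hi x x]
  rw [inner_self_eq_norm_sq (𝕜 := ℂ)]
  exact Real.sqrt_sq (norm_nonneg _)

end Aux

section Aux2

variable {A R : H →L[ℂ] H}

lemma aNorm_bddBelow (X : H →L[ℂ] H) :
    BddBelow {c : ℝ | 0 ≤ c ∧ ∀ x : H, anorm A (X x) ≤ c * anorm A x} :=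
  ⟨0, fun _ hc => hc.1⟩

lemma aNorm_nonneg (X : H →L[ℂ] H) : 0 ≤ aNorm A X :=
  Real.sInf_nonneg fun _ hc => hc.1

lemma aNorm_le {X : H →L[ℂ] H} {c : ℝ} (h0 : 0 ≤ c)
    (h : ∀ x : H, anorm A (X x) ≤ c * anorm A x) : aNorm A X ≤ c :=
  csInf_le (aNorm_bddBelow X) ⟨h0, h⟩

lemma aNorm_bound {X : H →L[ℂ] H} (hX : ABounded A X) (x : H) :
    anorm A (X x) ≤ aNorm A X * anorm A x := by
  obtain ⟨c, hc0, hc⟩ := hX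
  rcases eq_or_lt_of_le (anorm_nonneg' A x) with h0 | h0
  · have h1 : anorm A (X x) ≤ 0 := by
      have := hc x; rw [← h0] at this; simpa using this
    have h2 : anorm A (X x) = 0 := le_antisymm h1 (anorm_nonneg' A _)
    rw [h2, ← h0, mul_zero]
  · rw [← div_le_iff₀ h0]
    refine le_csInf ⟨c, hc0.le, hc⟩ ?_
    intro b hb
    rw [div_le_iff₀ h0]
    exact hb.2 x

lemma ABounded.mul {X Y : H →L[ℂ] H} (hX : ABounded A X) (hY : ABounded A Y) :
    ABounded A (X * Y) := by
  obtain ⟨c, hc0, hc⟩ := hX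
  obtain ⟨d, hd0, hd⟩ := hY
  refine ⟨c * d, mul_pos hc0 hd0, fun x => ?_⟩
  rw [ContinuousLinearMap.mul_apply, mul_assoc]
  exact (hc (Y x)).trans (by gcongr; exact hd x)

lemma aNorm_mul_le {X Y : H →L[ℂ] H} (hX : ABounded A X) (hY : ABounded A Y) :
    aNorm A (X * Y) ≤ aNorm A X * aNorm A Y := by
  refine aNorm_le (mul_nonneg (aNorm_nonneg X) (aNorm_nonneg Y)) fun x => ?_
  rw [ContinuousLinearMap.mul_apply, mul_assoc]
  exact (aNorm_bound hX (Y x)).trans (by gcongr; exacts [aNorm_nonneg X, aNorm_bound hY x])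

variable (hi : ∀ x y : H, (inner ℂ (A x) y : ℂ) = inner ℂ (R x) (R y))
variable (hn : ∀ x : H, anorm A x = ‖R x‖)

include hi hn in
lemma acs (u v : H) : ‖(inner ℂ (A u) v : ℂ)‖ ≤ anorm A u * anorm A v := by
  rw [hi, hn, hn]
  exact norm_inner_le_norm _ _

include hn in
lemma anorm_smul (c : ℂ) (x : H) : anorm A (c • x) = ‖c‖ * anorm A x := by
  rw [hn, hn, map_smul, norm_smul]

include hi hn in
lemma aNumRad_bddAbove {X : H →L[ℂ] H} (hX : ABounded A X) :
    BddAbove {c : ℝ | ∃ x : H, anorm A x = 1 ∧ c = ‖(inner ℂ (A (X x)) x : ℂ)‖} := by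
  refine ⟨aNorm A X, ?_⟩
  rintro c ⟨x, hx1, rfl⟩
  calc ‖(inner ℂ (A (X x)) x : ℂ)‖ ≤ anorm A (X x) * anorm A x := acs hi hn _ _
    _ ≤ (aNorm A X * anorm A x) * anorm A x := by
        gcongr; exact aNorm_bound hX x
    _ = aNorm A X := by rw [hx1]; ring

lemma aNumRad_nonneg (X : H →L[ℂ] H) : 0 ≤ aNumRad A X :=
  Real.sSup_nonneg fun c hc => by obtain ⟨x, _, rfl⟩ := hc; exact norm_nonneg _

include hi hn in
lemma omega_bound {X : H →L[ℂ] H} (hX : ABounded A X) (x : H) :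
    ‖(inner ℂ (A (X x)) x : ℂ)‖ ≤ aNumRad A X * anorm A x ^ 2 := by
  rcases eq_or_lt_of_le (anorm_nonneg' A x) with h0 | h0
  · have h1 : ‖(inner ℂ (A (X x)) x : ℂ)‖ ≤ 0 := by
      have := acs hi hn (X x) x
      rw [← h0, mul_zero] at this; exact this
    have h2 : (0:ℝ) ≤ aNumRad A X * anorm A x ^ 2 :=
      mul_nonneg (aNumRad_nonneg X) (sq_nonneg _)
    linarith
  · set t : ℝ := anorm A x with ht
    set y : H := ((t : ℂ))⁻¹ • x with hy
    have hyt : anorm A y = 1 := by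
      rw [hy, anorm_smul hn, norm_inv, Complex.norm_real, Real.norm_of_nonneg h0.le,
        inv_mul_cancel₀ h0.ne']
    have hval : ‖(inner ℂ (A (X y)) y : ℂ)‖ = (t⁻¹)^2 * ‖(inner ℂ (A (X x)) x : ℂ)‖ := by
      rw [hy, map_smul, map_smul, inner_smul_left, inner_smul_right]
      rw [norm_mul, norm_mul, RingHomIsometric.norm_map]
      rw [norm_inv, Complex.norm_real, Real.norm_of_nonneg h0.le]
      ring
    have hmem : ‖(inner ℂ (A (X y)) y : ℂ)‖ ∈
        {c : ℝ | ∃ x : H, anorm A x = 1 ∧ c = ‖(inner ℂ (A (X x)) x : ℂ)‖} :=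
      ⟨y, hyt, rfl⟩
    have hle : ‖(inner ℂ (A (X y)) y : ℂ)‖ ≤ aNumRad A X :=
      le_csSup (aNumRad_bddAbove hi hn hX) hmem
    rw [hval] at hle
    have := mul_le_mul_of_nonneg_left hle (le_of_lt (pow_pos h0 2))
    calc ‖(inner ℂ (A (X x)) x : ℂ)‖
        = t^2 * ((t⁻¹)^2 * ‖(inner ℂ (A (X x)) x : ℂ)‖) := by
          field_simp
      _ ≤ t^2 * aNumRad A X := this
      _ = aNumRad A X * anorm A x ^ 2 := by rw [← ht]; ring

end Aux2

lemma exists_phase (z : ℂ) : ∃ d : ℂ, ‖d‖ = 1 ∧ (starRingEnd ℂ) (d * d) * z = (‖z‖ : ℂ) := by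
  by_cases hz : z = 0
  · exact ⟨1, by simp, by simp [hz]⟩
  · obtain ⟨e, he⟩ := IsAlgClosed.exists_pow_nat_eq ((‖z‖ : ℂ) / z) (n := 2) (by norm_num)
    have hnorm : ‖e‖ = 1 := by
      have h2 : ‖e‖ ^ 2 = 1 := by
        rw [← norm_pow, he, norm_div, Complex.norm_real, norm_norm,
          div_self (norm_ne_zero_iff.mpr hz)]
      rw [← Real.sqrt_sq (norm_nonneg e), h2, Real.sqrt_one]
    refine ⟨(starRingEnd ℂ) e, by simpa using hnorm, ?_⟩
    rw [← map_mul, Complex.conj_conj, ← sq, he, div_mul_cancel₀ _ hz]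

section Aux3

variable {A R : H →L[ℂ] H}
variable (hi : ∀ x y : H, (inner ℂ (A x) y : ℂ) = inner ℂ (R x) (R y))
variable (hn : ∀ x : H, anorm A x = ‖R x‖)

include hi hn in
lemma sq_master {X : H →L[ℂ] H} {w : ℝ}
    (hb : ∀ u : H, ‖(inner ℂ (A (X u)) u : ℂ)‖ ≤ w * anorm A u ^ 2) (x : H) :
    ‖(inner ℂ (A ((X * X) x)) x : ℂ)‖ ≤
      w * anorm A (X x) ^ 2 + w * anorm A x ^ 2 - anorm A (X x) ^ 2 := by
  obtain ⟨d, hd1, hdz⟩ := exists_phase (inner ℂ (A ((X * X) x)) x : ℂ)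
  set Y : H →L[ℂ] H := d • X with hY
  have hYapp : ∀ u : H, Y u = d • X u := fun u => rfl
  have hYb : ∀ u : H, ‖(inner ℂ (A (Y u)) u : ℂ)‖ ≤ w * anorm A u ^ 2 := by
    intro u
    rw [hYapp u, map_smul, inner_smul_left, norm_mul, RingHomIsometric.norm_map, hd1, one_mul]
    exact hb u
  have hanormYx : anorm A (Y x) = anorm A (X x) := by
    rw [hYapp x, anorm_smul hn, hd1, one_mul]
  have f2 : (inner ℂ (A (Y (Y x))) x : ℂ) = (‖(inner ℂ (A ((X * X) x)) x : ℂ)‖ : ℂ) := by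
    have hYY : Y (Y x) = (d * d) • ((X * X) x) := by
      rw [hYapp, hYapp, map_smul, smul_smul, ContinuousLinearMap.mul_apply]
    rw [hYY, map_smul, inner_smul_left]
    exact hdz
  have f3 : (inner ℂ (A (Y x)) (Y x) : ℂ) = ((anorm A (X x) : ℝ) : ℂ) ^ 2 := by
    rw [hi, inner_self_eq_norm_sq_to_K, ← hn, hanormYx]
    norm_cast
  have expand : (inner ℂ (A (Y (Y x + x))) (Y x + x) : ℂ) - inner ℂ (A (Y (Y x - x))) (Y x - x)
      = 2 * inner ℂ (A (Y (Y x))) x + 2 * inner ℂ (A (Y x)) (Y x) := by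
    simp only [map_add, map_sub, inner_add_left, inner_add_right, inner_sub_left,
      inner_sub_right]
    ring
  have hreal : (inner ℂ (A (Y (Y x + x))) (Y x + x) : ℂ) - inner ℂ (A (Y (Y x - x))) (Y x - x)
      = ((2 * ‖(inner ℂ (A ((X * X) x)) x : ℂ)‖ + 2 * anorm A (X x) ^ 2 : ℝ) : ℂ) := by
    rw [expand, f2, f3]
    push_cast
    ring
  have hparallel : anorm A (Y x + x) ^ 2 + anorm A (Y x - x) ^ 2
      = 2 * anorm A (Y x) ^ 2 + 2 * anorm A x ^ 2 := by
    rw [hn, hn, hn, hn, map_add, map_sub]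
    have hpl := parallelogram_law_with_norm ℂ (R (Y x)) (R x)
    simp only [pow_two]
    linarith
  have h1 : (2 * ‖(inner ℂ (A ((X * X) x)) x : ℂ)‖ + 2 * anorm A (X x) ^ 2 : ℝ)
      ≤ ‖(inner ℂ (A (Y (Y x + x))) (Y x + x) : ℂ) - inner ℂ (A (Y (Y x - x))) (Y x - x)‖ := by
    rw [hreal, Complex.norm_real]
    exact le_abs_self _
  have h2 := norm_sub_le (inner ℂ (A (Y (Y x + x))) (Y x + x) : ℂ)
    (inner ℂ (A (Y (Y x - x))) (Y x - x) : ℂ)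
  have h3 := hYb (Y x + x)
  have h4 := hYb (Y x - x)
  have h5 : w * anorm A (Y x + x) ^ 2 + w * anorm A (Y x - x) ^ 2
      = 2 * w * anorm A (Y x) ^ 2 + 2 * w * anorm A x ^ 2 := by
    rw [← mul_add, hparallel]; ring
  rw [hanormYx] at h5
  linarith

end Aux3

section Aux4

variable {A R : H →L[ℂ] H}
variable (hi : ∀ x y : H, (inner ℂ (A x) y : ℂ) = inner ℂ (R x) (R y))
variable (hn : ∀ x : H, anorm A x = ‖R x‖)

include hi hn in
lemma sq_bound {X : H →L[ℂ] H} {w : ℝ} (hw : 0 ≤ w)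
    (hb : ∀ u : H, ‖(inner ℂ (A (X u)) u : ℂ)‖ ≤ w * anorm A u ^ 2) (x : H) :
    ‖(inner ℂ (A ((X * X) x)) x : ℂ)‖ ≤ w ^ 2 * anorm A x ^ 2 := by
  rcases hw.eq_or_lt with h0 | h0
  · have hm := sq_master hi hn hb x
    rw [← h0] at hm ⊢
    have := sq_nonneg (anorm A (X x))
    have := sq_nonneg (anorm A x)
    nlinarith
  · have hw' : (w : ℂ) ≠ 0 := by exact_mod_cast h0.ne'
    set X' : H →L[ℂ] H := ((w : ℂ))⁻¹ • X with hX'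
    have hb' : ∀ u : H, ‖(inner ℂ (A (X' u)) u : ℂ)‖ ≤ 1 * anorm A u ^ 2 := by
      intro u
      have happ : X' u = ((w : ℂ))⁻¹ • X u := rfl
      rw [happ, map_smul, inner_smul_left, norm_mul, RingHomIsometric.norm_map, norm_inv,
        Complex.norm_real, Real.norm_of_nonneg hw, one_mul]
      calc w⁻¹ * ‖(inner ℂ (A (X u)) u : ℂ)‖ ≤ w⁻¹ * (w * anorm A u ^ 2) := by
            gcongr
            exact hb u
        _ = anorm A u ^ 2 := by field_simp
    have hm := sq_master hi hn hb' x
    have hXX : (X' * X') x = (((w : ℂ))⁻¹ * ((w : ℂ))⁻¹) • ((X * X) x) := by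
      rw [ContinuousLinearMap.mul_apply, ContinuousLinearMap.mul_apply]
      show ((w : ℂ))⁻¹ • X (((w : ℂ))⁻¹ • X x) = _
      rw [map_smul, smul_smul]
    rw [hXX, map_smul, inner_smul_left, norm_mul, RingHomIsometric.norm_map, norm_mul,
      norm_inv, Complex.norm_real, Real.norm_of_nonneg hw] at hm
    have hm2 : w⁻¹ * w⁻¹ * ‖(inner ℂ (A ((X * X) x)) x : ℂ)‖ ≤ anorm A x ^ 2 := by linarith
    calc ‖(inner ℂ (A ((X * X) x)) x : ℂ)‖
        = w ^ 2 * (w⁻¹ * w⁻¹ * ‖(inner ℂ (A ((X * X) x)) x : ℂ)‖) := by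
          field_simp
      _ ≤ w ^ 2 * anorm A x ^ 2 := by gcongr

include hi hn in
lemma pow2_bound {X : H →L[ℂ] H} {w : ℝ} (hw : 0 ≤ w)
    (hb : ∀ u : H, ‖(inner ℂ (A (X u)) u : ℂ)‖ ≤ w * anorm A u ^ 2) :
    ∀ (k : ℕ) (x : H),
      ‖(inner ℂ (A ((X ^ (2 ^ k)) x)) x : ℂ)‖ ≤ w ^ (2 ^ k) * anorm A x ^ 2 := by
  intro k
  induction k with
  | zero => simpa using hb
  | succ k ih =>
    intro x
    have hXp : X ^ (2 ^ (k + 1)) = X ^ (2 ^ k) * X ^ (2 ^ k) := by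
      rw [← pow_add]
      congr 1
      ring
    have h2 := sq_bound hi hn (w := w ^ (2 ^ k)) (X := X ^ (2 ^ k))
      (pow_nonneg hw _) ih x
    have hww : (w ^ (2 ^ k)) ^ 2 = w ^ (2 ^ (k + 1)) := by
      rw [← pow_mul]
      congr 1
    rw [hXp]
    rw [hww] at h2
    exact h2

end Aux4

section Aux5

variable {A R : H →L[ℂ] H}
variable (hi : ∀ x y : H, (inner ℂ (A x) y : ℂ) = inner ℂ (R x) (R y))
variable (hn : ∀ x : H, anorm A x = ‖R x‖)

include hi hn in
lemma polar_key {X : H →L[ℂ] H} {w : ℝ}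
    (hb : ∀ u : H, ‖(inner ℂ (A (X u)) u : ℂ)‖ ≤ w * anorm A u ^ 2) (u v : H) :
    ‖(inner ℂ (A (X u)) v : ℂ)‖ ≤ w * (anorm A u ^ 2 + anorm A v ^ 2) := by
  have hpol : (4 : ℂ) * inner ℂ (A (X u)) v
      = (inner ℂ (A (X (u + v))) (u + v) - inner ℂ (A (X (u - v))) (u - v))
        + (-Complex.I) * inner ℂ (A (X (u + Complex.I • v))) (u + Complex.I • v)
        + Complex.I * inner ℂ (A (X (u - Complex.I • v))) (u - Complex.I • v) := by
    simp only [map_add, map_sub, map_smul, inner_add_left, inner_add_right,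
      inner_sub_left, inner_sub_right, inner_smul_left, inner_smul_right, Complex.conj_I]
    ring_nf
    simp [Complex.I_sq]
    ring
  have h4 : (4 : ℝ) * ‖(inner ℂ (A (X u)) v : ℂ)‖
      ≤ ‖(inner ℂ (A (X (u + v))) (u + v) : ℂ)‖ + ‖(inner ℂ (A (X (u - v))) (u - v) : ℂ)‖
        + ‖(inner ℂ (A (X (u + Complex.I • v))) (u + Complex.I • v) : ℂ)‖
        + ‖(inner ℂ (A (X (u - Complex.I • v))) (u - Complex.I • v) : ℂ)‖ := by
    calc (4 : ℝ) * ‖(inner ℂ (A (X u)) v : ℂ)‖ = ‖(4 : ℂ) * inner ℂ (A (X u)) v‖ := by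
          rw [norm_mul]; norm_num
      _ = ‖_‖ := by rw [hpol]
      _ ≤ _ := by
          refine (norm_add_le _ _).trans ?_
          gcongr
          refine (norm_add_le _ _).trans ?_
          gcongr
          · exact norm_sub_le _ _
          · rw [norm_mul, norm_neg, Complex.norm_I, one_mul]
          · rw [norm_mul, Complex.norm_I, one_mul]
  have hp1 : anorm A (u + v) ^ 2 + anorm A (u - v) ^ 2
      = 2 * anorm A u ^ 2 + 2 * anorm A v ^ 2 := by
    rw [hn, hn, hn, hn, map_add, map_sub]
    have hpl := parallelogram_law_with_norm ℂ (R u) (R v)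
    simp only [pow_two]
    linarith
  have hp2 : anorm A (u + Complex.I • v) ^ 2 + anorm A (u - Complex.I • v) ^ 2
      = 2 * anorm A u ^ 2 + 2 * anorm A v ^ 2 := by
    rw [hn, hn, hn, hn, map_add, map_sub, map_smul]
    have hpl := parallelogram_law_with_norm ℂ (R u) (Complex.I • R v)
    have hIv : ‖Complex.I • R v‖ = ‖R v‖ := by
      rw [norm_smul, Complex.norm_I, one_mul]
    simp only [pow_two]
    rw [hIv] at hpl
    linarith
  have b1 := hb (u + v)
  have b2 := hb (u - v)
  have b3 := hb (u + Complex.I • v)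
  have b4 := hb (u - Complex.I • v)
  have c1 : w * anorm A (u + v) ^ 2 + w * anorm A (u - v) ^ 2
      = w * (2 * anorm A u ^ 2 + 2 * anorm A v ^ 2) := by rw [← mul_add, hp1]
  have c2 : w * anorm A (u + Complex.I • v) ^ 2 + w * anorm A (u - Complex.I • v) ^ 2
      = w * (2 * anorm A u ^ 2 + 2 * anorm A v ^ 2) := by rw [← mul_add, hp2]
  have c3 : w * (2 * anorm A u ^ 2 + 2 * anorm A v ^ 2) + w * (2 * anorm A u ^ 2 + 2 * anorm A v ^ 2)
      = 4 * (w * (anorm A u ^ 2 + anorm A v ^ 2)) := by ring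
  linarith

include hi hn in
lemma aNorm_le_two_mul {X : H →L[ℂ] H} {w : ℝ} (hw : 0 ≤ w)
    (hb : ∀ u : H, ‖(inner ℂ (A (X u)) u : ℂ)‖ ≤ w * anorm A u ^ 2) :
    aNorm A X ≤ 2 * w := by
  have scaled : ∀ (u v : H) (t : ℝ), 0 < t →
      ‖(inner ℂ (A (X u)) v : ℂ)‖ ≤ w * (t ^ 2 * anorm A u ^ 2 + (t⁻¹) ^ 2 * anorm A v ^ 2) := by
    intro u v t ht
    have htc : (t : ℂ) ≠ 0 := by exact_mod_cast ht.ne'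
    have h := polar_key hi hn hb ((t : ℂ) • u) (((t : ℂ))⁻¹ • v)
    have he : (inner ℂ (A (X ((t : ℂ) • u))) (((t : ℂ))⁻¹ • v) : ℂ) = inner ℂ (A (X u)) v := by
      rw [map_smul, map_smul, inner_smul_left, inner_smul_right, Complex.conj_ofReal]
      field_simp
    rw [he, anorm_smul hn, anorm_smul hn, norm_inv, Complex.norm_real,
      Real.norm_of_nonneg ht.le] at h
    calc ‖(inner ℂ (A (X u)) v : ℂ)‖ ≤ w * ((t * anorm A u) ^ 2 + (t⁻¹ * anorm A v) ^ 2) := h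
      _ = w * (t ^ 2 * anorm A u ^ 2 + (t⁻¹) ^ 2 * anorm A v ^ 2) := by ring
  refine aNorm_le (by positivity) fun x => ?_
  set s := anorm A (X x) with hs
  set r := anorm A x with hr
  have hs0 : 0 ≤ s := anorm_nonneg' A _
  have hr0 : 0 ≤ r := anorm_nonneg' A _
  have hss : ∀ t : ℝ, 0 < t → s ^ 2 ≤ w * (t ^ 2 * r ^ 2 + (t⁻¹) ^ 2 * s ^ 2) := by
    intro t ht
    have h := scaled x (X x) t ht
    have hv : (inner ℂ (A (X x)) (X x) : ℂ) = ((s : ℝ) : ℂ) ^ 2 := by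
      rw [hi, inner_self_eq_norm_sq_to_K, ← hn]
      norm_cast
    rw [hv] at h
    rw [norm_pow, Complex.norm_real, Real.norm_of_nonneg hs0] at h
    exact h
  rcases eq_or_lt_of_le hs0 with h0 | h0
  · rw [← h0]
    positivity
  rcases eq_or_lt_of_le hr0 with hr1 | hr1
  · exfalso
    have ht : (0:ℝ) < Real.sqrt w + 1 := by positivity
    have h := hss _ ht
    rw [← hr1] at h
    have hw2 : w < (Real.sqrt w + 1) ^ 2 := by
      nlinarith [Real.sq_sqrt hw, Real.sqrt_nonneg w]
    have hinv : ((Real.sqrt w + 1)⁻¹) ^ 2 = ((Real.sqrt w + 1) ^ 2)⁻¹ := inv_pow _ _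
    have hp : (0:ℝ) < (Real.sqrt w + 1) ^ 2 := pow_pos ht 2
    have k1 : w * ((Real.sqrt w + 1) ^ 2)⁻¹ < 1 := by
      rw [← div_eq_mul_inv]
      exact (div_lt_one hp).mpr hw2
    rw [hinv] at h
    have h' : s ^ 2 ≤ w * ((Real.sqrt w + 1) ^ 2)⁻¹ * s ^ 2 := by
      calc s ^ 2 ≤ w * ((Real.sqrt w + 1) ^ 2 * 0 ^ 2 + ((Real.sqrt w + 1) ^ 2)⁻¹ * s ^ 2) := h
        _ = w * ((Real.sqrt w + 1) ^ 2)⁻¹ * s ^ 2 := by ring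
    nlinarith [pow_pos h0 2]
  · have ht : (0:ℝ) < Real.sqrt (s / r) := Real.sqrt_pos.mpr (by positivity)
    have h := hss _ ht
    have h1 : (Real.sqrt (s / r)) ^ 2 = s / r := Real.sq_sqrt (by positivity)
    have h2 : ((Real.sqrt (s / r))⁻¹) ^ 2 = r / s := by
      rw [inv_pow, h1, inv_div]
    rw [h1, h2] at h
    have h3 : s ^ 2 ≤ 2 * w * s * r := by
      have : w * (s / r * r ^ 2 + r / s * s ^ 2) = 2 * w * s * r := by
        field_simp
        ring
      linarith [this ▸ h]
    nlinarith
end Aux5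

section Aux6

variable {A R : H →L[ℂ] H}

lemma aSpecRad_le_term (X : H →L[ℂ] H) (n : ℕ+) :
    aSpecRad A X ≤ aNorm A (X ^ (n : ℕ)) ^ ((n : ℝ))⁻¹ := by
  apply ciInf_le
  refine ⟨0, ?_⟩
  rintro y ⟨m, rfl⟩
  exact Real.rpow_nonneg (aNorm_nonneg _) _

variable (hi : ∀ x y : H, (inner ℂ (A x) y : ℂ) = inner ℂ (R x) (R y))
variable (hn : ∀ x : H, anorm A x = ‖R x‖)

include hi hn in
lemma aSpecRad_le_aNumRad {X : H →L[ℂ] H} (hX : ABounded A X) :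
    aSpecRad A X ≤ aNumRad A X := by
  set w := aNumRad A X with hwdef
  have hw : 0 ≤ w := aNumRad_nonneg X
  have hb := omega_bound hi hn hX
  have key : ∀ k : ℕ, aSpecRad A X ≤ (2:ℝ) ^ (((2:ℝ) ^ k)⁻¹) * w := by
    intro k
    set n : ℕ+ := ⟨2 ^ k, pow_pos (by norm_num) k⟩ with hndef
    have h1 := aSpecRad_le_term (A := A) X n
    have hcast2 : (((2 ^ k : ℕ)) : ℝ) = (2:ℝ) ^ k := by push_cast; ring
    have hcast : ((n : ℕ) : ℝ) = (2:ℝ) ^ k := hcast2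
    have h2 : aNorm A (X ^ (n : ℕ)) ≤ 2 * w ^ (2 ^ k : ℕ) :=
      aNorm_le_two_mul hi hn (pow_nonneg hw _) (pow2_bound hi hn hw hb k)
    have hc0 : ((2:ℝ) ^ k) ≠ 0 := by positivity
    calc aSpecRad A X ≤ aNorm A (X ^ (n : ℕ)) ^ ((n : ℝ))⁻¹ := h1
      _ ≤ (2 * w ^ (2 ^ k : ℕ)) ^ ((n : ℝ))⁻¹ := by
          apply Real.rpow_le_rpow (aNorm_nonneg _) h2
          positivity
      _ = (2:ℝ) ^ (((2:ℝ) ^ k)⁻¹) * w := by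
          rw [hcast, Real.mul_rpow (by norm_num) (pow_nonneg hw _)]
          congr 1
          rw [← Real.rpow_natCast w (2 ^ k), hcast2, ← Real.rpow_mul hw,
            mul_inv_cancel₀ hc0, Real.rpow_one]
  have htend : Filter.Tendsto (fun k : ℕ => (2:ℝ) ^ (((2:ℝ) ^ k)⁻¹) * w)
      Filter.atTop (nhds (1 * w)) := by
    apply Filter.Tendsto.mul_const
    have h1 : Filter.Tendsto (fun k : ℕ => ((2:ℝ) ^ k)⁻¹) Filter.atTop (nhds 0) := by
      have := (tendsto_pow_atTop_atTop_of_one_lt (one_lt_two (α := ℝ))).inv_tendsto_atTop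
      exact this
    have h2 : ContinuousAt (fun t : ℝ => (2:ℝ) ^ t) 0 :=
      Real.continuousAt_const_rpow (by norm_num)
    have h3 := h2.tendsto.comp h1
    rwa [Real.rpow_zero] at h3
  have hfin := ge_of_tendsto htend (Filter.Eventually.of_forall key)
  rwa [one_mul] at hfin

end Aux6

/-- for commuting `A`-bounded `T, S`,
`r_A(TS) ≤ (ω_A(TS) + ‖T²‖_A^{1/2} ‖S²‖_A^{1/2}) / 2`. -/
theorem stmt16 (A T S : H →L[ℂ] H) (hA : A.IsPositive)
    (hT : ABounded A T) (hS : ABounded A S) (hc : T * S = S * T) :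
    aSpecRad A (T * S) ≤
      (aNumRad A (T * S) +
        Real.sqrt (aNorm A (T ^ 2)) * Real.sqrt (aNorm A (S ^ 2))) / 2 := by
  obtain ⟨R, hi, hn⟩ := exists_sqrt A hA
  have hTS : ABounded A (T * S) := ABounded.mul hT hS
  have hT2 : ABounded A (T ^ 2) := by rw [pow_two]; exact ABounded.mul hT hT
  have hS2 : ABounded A (S ^ 2) := by rw [pow_two]; exact ABounded.mul hS hS
  have h1 : aSpecRad A (T * S) ≤ aNumRad A (T * S) := aSpecRad_le_aNumRad hi hn hTS
  have hcomm : (T * S) ^ 2 = T ^ 2 * S ^ 2 := by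
    rw [pow_two, pow_two, pow_two, mul_assoc, ← mul_assoc S T S, ← hc, mul_assoc T S S,
      ← mul_assoc]
  have h2 := aSpecRad_le_term (A := A) (T * S) 2
  have hn2 : (((2 : ℕ+)) : ℕ) = 2 := rfl
  have hr2 : (((2 : ℕ)) : ℝ) = (2 : ℝ) := by norm_num
  rw [hn2, hr2] at h2
  have h3 : aNorm A ((T * S) ^ 2) ≤ aNorm A (T ^ 2) * aNorm A (S ^ 2) := by
    rw [hcomm]
    exact aNorm_mul_le hT2 hS2
  have h4 : aSpecRad A (T * S) ≤ (aNorm A (T ^ 2) * aNorm A (S ^ 2)) ^ ((2 : ℝ))⁻¹ :=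
    h2.trans (Real.rpow_le_rpow (aNorm_nonneg _) h3 (by norm_num))
  have h5 : (aNorm A (T ^ 2) * aNorm A (S ^ 2)) ^ ((2 : ℝ))⁻¹
      = Real.sqrt (aNorm A (T ^ 2)) * Real.sqrt (aNorm A (S ^ 2)) := by
    rw [show ((2 : ℝ))⁻¹ = 1 / 2 by norm_num, ← Real.sqrt_eq_rpow,
      Real.sqrt_mul (aNorm_nonneg _)]
  rw [h5] at h4
  linarith
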